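/- arXiv:2501.09730 — 4 statements merged into one kernel-verified Lean document; each statement's English description precedes it below -/
import Mathlib

section
/- Along any radially reduced, affinely parametrized, future-directed null geodesic in the Schwarzschild exterior of mass M, the function s ↦ (r(s)²/Ω²(r(s)))·|p_u(s)| is differentiable and satisfies d/ds[(r²/Ω²)|p_u|] = 2((r−3M)/Ω⁴)·|p_u|². -/
open Real

/-- along any radially reduced, affinely parametrized, future-directed null
geodesic in the Schwarzschild exterior of mass `M`, the function
`s ↦ (r(s)²/Ω²(r(s)))·|p_u(s)|` is differentiable and satisfies
`d/ds[(r²/Ω²)|p_u|] = 2((r−3M)/Ω⁴)·|p_u|²`, where `Ω²(r) = 1 − 2M/r` and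
`|p_u| = (E + p_{r*})/2`. -/
theorem schwarzschild_redshift_weight_derivative
    (M : ℝ) (hM : 0 < M)
    (I : Set ℝ) (hI : I.OrdConnected)
    (r prs : ℝ → ℝ) (E ℓ : ℝ) (hE : 0 < E) (hl : 0 ≤ ℓ)
    (hr2M : ∀ s ∈ I, 2 * M < r s)
    (hdr : ∀ s ∈ I, HasDerivWithinAt r (prs s) I s)
    (hdp : ∀ s ∈ I, HasDerivWithinAt prs ((r s - 3 * M) / (r s) ^ 4 * ℓ ^ 2) I s)
    (hnull : ∀ s ∈ I, E ^ 2 = (prs s) ^ 2 + (1 - 2 * M / r s) * ℓ ^ 2 / (r s) ^ 2) :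
    ∀ s ∈ I,
      HasDerivWithinAt
        (fun u => (r u) ^ 2 / (1 - 2 * M / r u) * ((E + prs u) / 2))
        (2 * (r s - 3 * M) / (1 - 2 * M / r s) ^ 2 * ((E + prs s) / 2) ^ 2) I s := by
  intro s hs
  have hr := hr2M s hs
  have hrpos : 0 < r s := by linarith
  have hΩpos : 0 < 1 - 2 * M / r s := by
    rw [sub_pos, div_lt_one hrpos]; linarith
  have hΩ : (1 : ℝ) - 2 * M / r s ≠ 0 := ne_of_gt hΩpos
  -- derivative of numerator r²
  have hnum : HasDerivWithinAt (fun u => (r u) ^ 2) (2 * r s * prs s) I s := by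
    have := (hdr s hs).fun_pow 2
    simpa [mul_comm, mul_assoc] using this
  -- derivative of denominator 1 - 2M/r
  have hden : HasDerivWithinAt (fun u => 1 - 2 * M / r u)
      (2 * M * prs s / (r s) ^ 2) I s := by
    have h0 : HasDerivWithinAt (fun u => 2 * M / r u)
        ((0 * r s - 2 * M * prs s) / (r s) ^ 2) I s :=
      (hasDerivWithinAt_const s I (2 * M)).fun_div (hdr s hs) hrpos.ne'
    have h1 := h0.const_sub 1
    refine h1.congr_deriv ?_
    ring
  -- derivative of quotient
  have hq : HasDerivWithinAt (fun u => (r u) ^ 2 / (1 - 2 * M / r u))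
      ((2 * r s * prs s * (1 - 2 * M / r s) - (r s) ^ 2 * (2 * M * prs s / (r s) ^ 2)) /
        (1 - 2 * M / r s) ^ 2) I s := hnum.fun_div hden hΩ
  -- derivative of (E + prs)/2
  have hg : HasDerivWithinAt (fun u => (E + prs u) / 2)
      ((r s - 3 * M) / (r s) ^ 4 * ℓ ^ 2 / 2) I s :=
    ((hdp s hs).const_add E).div_const 2
  have h := hq.fun_mul hg
  refine h.congr_deriv ?_
  have hnl := hnull s hs
  have hL : ℓ ^ 2 * (r s - 2 * M) = (E ^ 2 - (prs s) ^ 2) * (r s) ^ 3 := by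
    have h2 : (1 - 2 * M / r s) * ℓ ^ 2 / (r s) ^ 2 = E ^ 2 - (prs s) ^ 2 := by
      linarith
    field_simp at h2
    nlinarith [h2]
  have hr2 : r s - 2 * M ≠ 0 := sub_ne_zero.mpr (ne_of_gt hr)
  have hl2 : ℓ ^ 2 = (E ^ 2 - (prs s) ^ 2) * (r s) ^ 3 / (r s - 2 * M) := by
    field_simp [hr2] at hL ⊢
    linarith [hL]
  rw [hl2]
  field_simp [hrpos.ne', hr2]
  ring
end

section
/- Along any radially reduced future-directed null geodesic in the Schwarzschild exterior of mass M, the weight φ_+ satisfies d/ds φ_+ = +( E/(r^{1/2}(r+6M)^{1/2}Ω²) )·φ_+. Moreover, at every point of the null-shell one has the algebraic identity φ_+·φ_− = 27M²·E² − ℓ². -/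
open Real

/-- The trapping weight `φ₋ = (r/Ω)·p_{r*} + (r/Ω)·(1+6M/r)^{1/2}·(1−3M/r)·p_t`,
with `p_t = −E` and `Ω = (1 − 2M/r)^{1/2}`. -/
noncomputable def phiMinus (M E rv pv : ℝ) : ℝ :=
  rv / Real.sqrt (1 - 2 * M / rv) * pv
    + rv / Real.sqrt (1 - 2 * M / rv) * Real.sqrt (1 + 6 * M / rv) * (1 - 3 * M / rv) * (-E)

/-- The trapping weight `φ₊ = (r/Ω)·p_{r*} − (r/Ω)·(1+6M/r)^{1/2}·(1−3M/r)·p_t`. -/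
noncomputable def phiPlus (M E rv pv : ℝ) : ℝ :=
  rv / Real.sqrt (1 - 2 * M / rv) * pv
    - rv / Real.sqrt (1 - 2 * M / rv) * Real.sqrt (1 + 6 * M / rv) * (1 - 3 * M / rv) * (-E)

lemma phiPlus_eq (M E rv pv : ℝ) (hM : 0 < M) (h : 2 * M < rv) :
    phiPlus M E rv pv =
      rv * Real.sqrt rv * pv / Real.sqrt (rv - 2 * M)
        + E * (Real.sqrt (rv + 6 * M) * (rv - 3 * M) / Real.sqrt (rv - 2 * M)) := by
  have hr : 0 < rv := by linarith
  have hb0 : (0:ℝ) < rv - 2 * M := by linarith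
  have h1 : 1 - 2 * M / rv = (rv - 2 * M) / rv := by field_simp
  have h2 : 1 + 6 * M / rv = (rv + 6 * M) / rv := by field_simp
  have ha : (0:ℝ) < Real.sqrt rv := Real.sqrt_pos.mpr hr
  have hbp : (0:ℝ) < Real.sqrt (rv - 2 * M) := Real.sqrt_pos.mpr hb0
  have ha2 : Real.sqrt rv ^ 2 = rv := Real.sq_sqrt hr.le
  rw [phiPlus, h1, h2, Real.sqrt_div hb0.le rv, Real.sqrt_div (by linarith : (0:ℝ) ≤ rv + 6 * M) rv]
  field_simp
  ring

/-- along any radially reduced future-directed null geodesic,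
`d/ds φ₊ = +(E/(r^{1/2}(r+6M)^{1/2}Ω²))·φ₊`; moreover, at every point of the null-shell,
`φ₊·φ₋ = 27M²E² − ℓ²`. -/
theorem schwarzschild_phiPlus_derivative_and_product
    (M : ℝ) (hM : 0 < M)
    (I : Set ℝ) (hI : I.OrdConnected)
    (r prs : ℝ → ℝ) (E ℓ : ℝ) (hE : 0 < E) (hl : 0 ≤ ℓ)
    (hr2M : ∀ s ∈ I, 2 * M < r s)
    (hdr : ∀ s ∈ I, HasDerivWithinAt r (prs s) I s)
    (hdp : ∀ s ∈ I, HasDerivWithinAt prs ((r s - 3 * M) / (r s) ^ 4 * ℓ ^ 2) I s)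
    (hnull : ∀ s ∈ I, E ^ 2 = (prs s) ^ 2 + (1 - 2 * M / r s) * ℓ ^ 2 / (r s) ^ 2) :
    (∀ s ∈ I,
      HasDerivWithinAt (fun u => phiPlus M E (r u) (prs u))
        (E / (Real.sqrt (r s) * Real.sqrt (r s + 6 * M) * (1 - 2 * M / r s))
          * phiPlus M E (r s) (prs s)) I s) ∧
    (∀ rv pv E' ℓ' : ℝ, 2 * M < rv → 0 < E' → 0 ≤ ℓ' →
      E' ^ 2 = pv ^ 2 + (1 - 2 * M / rv) * ℓ' ^ 2 / rv ^ 2 →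
      phiPlus M E' rv pv * phiMinus M E' rv pv = 27 * M ^ 2 * E' ^ 2 - ℓ' ^ 2) := by
  constructor
  · intro s hs
    have hRs := hr2M s hs
    have hR0 : (0:ℝ) < r s := by linarith
    have hb0 : (0:ℝ) < r s - 2 * M := by linarith
    have hc0 : (0:ℝ) < r s + 6 * M := by linarith
    have hr' := hdr s hs
    have hp' := hdp s hs
    have hap : (0:ℝ) < Real.sqrt (r s) := Real.sqrt_pos.mpr hR0
    have hbp : (0:ℝ) < Real.sqrt (r s - 2 * M) := Real.sqrt_pos.mpr hb0
    have hcp : (0:ℝ) < Real.sqrt (r s + 6 * M) := Real.sqrt_pos.mpr hc0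
    have ha2 : Real.sqrt (r s) ^ 2 = r s := Real.sq_sqrt hR0.le
    have hb2 : Real.sqrt (r s - 2 * M) ^ 2 = r s - 2 * M := Real.sq_sqrt hb0.le
    have hc2 : Real.sqrt (r s + 6 * M) ^ 2 = r s + 6 * M := Real.sq_sqrt hc0.le
    have hn := hnull s hs
    have haD : HasDerivWithinAt (fun u => Real.sqrt (r u))
        (prs s / (2 * Real.sqrt (r s))) I s := hr'.sqrt hR0.ne'
    have hbD : HasDerivWithinAt (fun u => Real.sqrt (r u - 2 * M))
        (prs s / (2 * Real.sqrt (r s - 2 * M))) I s :=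
      (hr'.sub_const (2 * M)).sqrt hb0.ne'
    have hcD : HasDerivWithinAt (fun u => Real.sqrt (r u + 6 * M))
        (prs s / (2 * Real.sqrt (r s + 6 * M))) I s :=
      (hr'.add_const (6 * M)).sqrt hc0.ne'
    have hN1 : HasDerivWithinAt (fun u => r u * Real.sqrt (r u) * prs u)
        ((prs s * Real.sqrt (r s) + r s * (prs s / (2 * Real.sqrt (r s)))) * prs s
          + r s * Real.sqrt (r s) * ((r s - 3 * M) / (r s) ^ 4 * ℓ ^ 2)) I s :=
      (hr'.mul haD).mul hp'
    have hT1 : HasDerivWithinAt (fun u => r u * Real.sqrt (r u) * prs u / Real.sqrt (r u - 2 * M))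
        ((((prs s * Real.sqrt (r s) + r s * (prs s / (2 * Real.sqrt (r s)))) * prs s
            + r s * Real.sqrt (r s) * ((r s - 3 * M) / (r s) ^ 4 * ℓ ^ 2)) * Real.sqrt (r s - 2 * M)
          - r s * Real.sqrt (r s) * prs s * (prs s / (2 * Real.sqrt (r s - 2 * M))))
          / Real.sqrt (r s - 2 * M) ^ 2) I s := hN1.div hbD hbp.ne'
    have hN2 : HasDerivWithinAt (fun u => Real.sqrt (r u + 6 * M) * (r u - 3 * M))
        (prs s / (2 * Real.sqrt (r s + 6 * M)) * (r s - 3 * M) + Real.sqrt (r s + 6 * M) * prs s)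
        I s := hcD.mul (hr'.sub_const (3 * M))
    have hT2 : HasDerivWithinAt
        (fun u => E * (Real.sqrt (r u + 6 * M) * (r u - 3 * M) / Real.sqrt (r u - 2 * M)))
        (E * (((prs s / (2 * Real.sqrt (r s + 6 * M)) * (r s - 3 * M)
            + Real.sqrt (r s + 6 * M) * prs s) * Real.sqrt (r s - 2 * M)
          - Real.sqrt (r s + 6 * M) * (r s - 3 * M) * (prs s / (2 * Real.sqrt (r s - 2 * M))))
          / Real.sqrt (r s - 2 * M) ^ 2)) I s := (hN2.div hbD hbp.ne').const_mul E
    have hF := hT1.add hT2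
    have hfun : ∀ y ∈ I, phiPlus M E (r y) (prs y)
        = r y * Real.sqrt (r y) * prs y / Real.sqrt (r y - 2 * M)
          + E * (Real.sqrt (r y + 6 * M) * (r y - 3 * M) / Real.sqrt (r y - 2 * M)) := fun y hy =>
      phiPlus_eq M E (r y) (prs y) hM (hr2M y hy)
    have htar : E / (Real.sqrt (r s) * Real.sqrt (r s + 6 * M) * (1 - 2 * M / r s))
          * phiPlus M E (r s) (prs s)
        = (((prs s * Real.sqrt (r s) + r s * (prs s / (2 * Real.sqrt (r s)))) * prs s
            + r s * Real.sqrt (r s) * ((r s - 3 * M) / (r s) ^ 4 * ℓ ^ 2)) * Real.sqrt (r s - 2 * M)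
          - r s * Real.sqrt (r s) * prs s * (prs s / (2 * Real.sqrt (r s - 2 * M))))
          / Real.sqrt (r s - 2 * M) ^ 2
          + E * (((prs s / (2 * Real.sqrt (r s + 6 * M)) * (r s - 3 * M)
            + Real.sqrt (r s + 6 * M) * prs s) * Real.sqrt (r s - 2 * M)
          - Real.sqrt (r s + 6 * M) * (r s - 3 * M) * (prs s / (2 * Real.sqrt (r s - 2 * M))))
          / Real.sqrt (r s - 2 * M) ^ 2) := by
      have hden : (1:ℝ) - 2 * M / r s ≠ 0 := by
        have : (0:ℝ) < 1 - 2 * M / r s := by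
          rw [sub_pos, div_lt_one hR0]; linarith
        exact this.ne'
      rw [phiPlus_eq M E (r s) (prs s) hM hRs]
      rw [show E / (Real.sqrt (r s) * Real.sqrt (r s + 6 * M) * (1 - 2 * M / r s))
          = E * Real.sqrt (r s) / (Real.sqrt (r s + 6 * M) * Real.sqrt (r s - 2 * M) ^ 2) by
        rw [hb2]
        rw [show r s - 2 * M = r s * (1 - 2 * M / r s) by field_simp]
        field_simp
        rw [ha2]]
      set a := Real.sqrt (r s)
      set b := Real.sqrt (r s - 2 * M)
      set c := Real.sqrt (r s + 6 * M)
      set R := r s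
      set P := prs s
      have hn' : E ^ 2 * (r s) ^ 3 = prs s ^ 2 * (r s) ^ 3 + (r s - 2 * M) * ℓ ^ 2 := by
        rw [hn]; field_simp; ring
      field_simp
      rw [ha2, hb2, hc2]
      linear_combination (2*c*R*(R-3*M)) * hn'
    rw [htar]
    exact hF.congr hfun (hfun s hs)
  · intro rv pv E' ℓ' hrv hE' hl' hn
    have hr0 : (0:ℝ) < rv := by linarith
    have h1pos : (0:ℝ) < 1 - 2 * M / rv := by
      rw [sub_pos, div_lt_one hr0]; linarith
    have h2pos : (0:ℝ) ≤ 1 + 6 * M / rv := by positivity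
    have hs1 : Real.sqrt (1 - 2 * M / rv) ^ 2 = 1 - 2 * M / rv := Real.sq_sqrt h1pos.le
    have hs2 : Real.sqrt (1 + 6 * M / rv) ^ 2 = 1 + 6 * M / rv := Real.sq_sqrt h2pos
    have hs1p : (0:ℝ) < Real.sqrt (1 - 2 * M / rv) := Real.sqrt_pos.mpr h1pos
    rw [phiPlus, phiMinus]
    set s1 := Real.sqrt (1 - 2 * M / rv)
    set s2 := Real.sqrt (1 + 6 * M / rv)
    have hs1' : s1 ^ 2 * rv = rv - 2 * M := by rw [hs1]; field_simp
    have hs2' : s2 ^ 2 * rv = rv + 6 * M := by rw [hs2]; field_simp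
    have hn' : E' ^ 2 * rv ^ 3 = pv ^ 2 * rv ^ 3 + (rv - 2 * M) * ℓ' ^ 2 := by
      rw [hn]; field_simp
    field_simp
    refine mul_left_cancel₀ hr0.ne' ?_
    linear_combination (-(rv-3*M)^2*E'^2) * hs2' + (-(27*M^2*E'^2-ℓ'^2)) * hs1' - hn'
end

section
/- Define on the null-shell the weight ω := 1 − (p_{r*}/E)·(3 − 1/log(2+r)), where E = −p_t. Then: (i) along any radially reduced future-directed null geodesic, at every parameter s with r(s) ≥ 6M, one has E·ω'(s) ≤ −p_{r*}²/((2+r)·log²(2+r)) − ℓ²/(2r³); and (ii) if χ : ℝ → ℝ is a C¹ nondecreasing function with χ(s) = 0 for s ≤ 0 and χ(s) = 1 for s ≥ 1, and R ≥ 3M, then along any radially reduced future-directed null geodesic the function s ↦ χ(r(s) − R)·χ(−p_{r*}(s)) is nonincreasing, i.e. d/ds[χ(r−R)·χ(−p_{r*})] ≤ 0. -/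
open Real

lemma monotone_deriv_nonneg_aux {f : ℝ → ℝ} (hf : Monotone f)
    (hd : Differentiable ℝ f) (x : ℝ) : 0 ≤ deriv f x := by
  have h := (hd x).hasDerivAt
  rw [hasDerivAt_iff_tendsto_slope] at h
  have h2 : Filter.Tendsto (slope f x) (nhdsWithin x (Set.Ioi x)) (nhds (deriv f x)) :=
    h.mono_left (nhdsWithin_mono x (fun y hy => ne_of_gt hy))
  refine ge_of_tendsto h2 ?_
  filter_upwards [self_mem_nhdsWithin] with y hy
  rw [slope_def_field]
  exact div_nonneg (by linarith [hf (le_of_lt hy)]) (by simp at hy; linarith)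

/-- properties of the weight `ω = 1 − (p_{r*}/E)·(3 − 1/log(2+r))` and of
the cutoff `χ(r−R)·χ(−p_{r*})` along radially reduced future-directed null geodesics. -/
theorem schwarzschild_faraway_incoming_weights
    (M : ℝ) (hM : 0 < M)
    (I : Set ℝ) (hI : I.OrdConnected)
    (r prs : ℝ → ℝ) (E ℓ : ℝ) (hE : 0 < E) (hl : 0 ≤ ℓ)
    (hr2M : ∀ s ∈ I, 2 * M < r s)
    (hdr : ∀ s ∈ I, HasDerivWithinAt r (prs s) I s)
    (hdp : ∀ s ∈ I, HasDerivWithinAt prs ((r s - 3 * M) / (r s) ^ 4 * ℓ ^ 2) I s)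
    (hnull : ∀ s ∈ I, E ^ 2 = (prs s) ^ 2 + (1 - 2 * M / r s) * ℓ ^ 2 / (r s) ^ 2) :
    (∀ s ∈ I, 6 * M ≤ r s →
      ∃ d, HasDerivWithinAt
          (fun u => 1 - prs u / E * (3 - 1 / Real.log (2 + r u))) d I s ∧
        E * d ≤ -(prs s) ^ 2 / ((2 + r s) * (Real.log (2 + r s)) ^ 2)
            - ℓ ^ 2 / (2 * (r s) ^ 3)) ∧
    (∀ χ : ℝ → ℝ, ContDiff ℝ 1 χ → Monotone χ →
      (∀ x, x ≤ 0 → χ x = 0) → (∀ x, 1 ≤ x → χ x = 1) →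
      ∀ R : ℝ, 3 * M ≤ R → ∀ s ∈ I,
        ∃ d, HasDerivWithinAt (fun u => χ (r u - R) * χ (-prs u)) d I s ∧ d ≤ 0) := by
  constructor
  · intro s hs h6M
    have hrpos : 0 < r s := by linarith [hr2M s hs]
    have h2r : (0:ℝ) < 2 + r s := by linarith
    have hLpos : 0 < Real.log (2 + r s) := Real.log_pos (by linarith)
    have hLne : Real.log (2 + r s) ≠ 0 := ne_of_gt hLpos
    have hL2 : (1:ℝ)/2 < Real.log (2 + r s) := by
      have hlog : Real.log 2 ≤ Real.log (2 + r s) :=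
        Real.log_le_log (by norm_num) (by linarith)
      have := Real.log_two_gt_d9
      linarith
    have hL : HasDerivWithinAt (fun u => Real.log (2 + r u)) (prs s / (2 + r s)) I s :=
      ((hdr s hs).const_add 2).log (ne_of_gt h2r)
    have hinv := hL.inv hLne
    have hA := hinv.const_sub 3
    have hP := (hdp s hs).div_const E
    have hfinal := (hP.mul hA).const_sub 1
    have hfun : (fun u => 1 - prs u / E * (3 - 1 / Real.log (2 + r u)))
        = fun u => 1 - prs u / E * (3 - (Real.log (2 + r u))⁻¹) := by
      funext u; rw [one_div]
    refine ⟨_, hfun ▸ hfinal, ?_⟩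
    have hEne : E ≠ 0 := ne_of_gt hE
    have h2rne : (2 + r s) ≠ 0 := ne_of_gt h2r
    have heq : E * -((r s - 3 * M) / r s ^ 4 * ℓ ^ 2 / E * (3 - (Real.log (2 + r s))⁻¹)
          + prs s / E * -(-(prs s / (2 + r s)) / Real.log (2 + r s) ^ 2))
        = -((r s - 3 * M) / r s ^ 4 * ℓ ^ 2 * (3 - (Real.log (2 + r s))⁻¹))
          + -(prs s) ^ 2 / ((2 + r s) * (Real.log (2 + r s)) ^ 2) := by
      field_simp
      ring
    rw [show ((fun u => Real.log (2 + r u))⁻¹ s) = (Real.log (2 + r s))⁻¹ from rfl, heq]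
    -- key inequality
    have hArge : (1:ℝ) ≤ 3 - (Real.log (2 + r s))⁻¹ := by
      have : (Real.log (2 + r s))⁻¹ < 2 := by
        rw [inv_lt_comm₀ hLpos (by norm_num)]
        linarith
      linarith
    have hp'1 : ℓ ^ 2 / (2 * (r s) ^ 3) ≤ (r s - 3 * M) / r s ^ 4 * ℓ ^ 2 := by
      have hdiff : (r s - 3 * M) / r s ^ 4 * ℓ ^ 2 - ℓ ^ 2 / (2 * (r s) ^ 3)
          = ℓ ^ 2 * (r s - 6 * M) / (2 * (r s) ^ 4) := by
        field_simp
        ring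
      have hnn : 0 ≤ ℓ ^ 2 * (r s - 6 * M) / (2 * (r s) ^ 4) :=
        div_nonneg (mul_nonneg (sq_nonneg _) (by linarith)) (by positivity)
      linarith
    have hp'nn : 0 ≤ (r s - 3 * M) / r s ^ 4 * ℓ ^ 2 := by
      have h0 : 0 ≤ ℓ ^ 2 / (2 * (r s) ^ 3) := by positivity
      linarith
    have hkey : ℓ ^ 2 / (2 * (r s) ^ 3)
        ≤ (r s - 3 * M) / r s ^ 4 * ℓ ^ 2 * (3 - (Real.log (2 + r s))⁻¹) := by
      nlinarith [hp'1, hArge, hp'nn]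
    linarith
  · intro χ hχ hmono hχ0 hχ1 R hR s hs
    have hχd : Differentiable ℝ χ := hχ.differentiable one_ne_zero
    have hd' : ∀ x, 0 ≤ deriv χ x := monotone_deriv_nonneg_aux hmono hχd
    have hχnn : ∀ x, 0 ≤ χ x := by
      intro x
      rcases le_or_gt x 0 with h | h
      · rw [hχ0 x h]
      · have : χ 0 ≤ χ x := hmono (le_of_lt h)
        rw [hχ0 0 le_rfl] at this; exact this
    have hd1 : HasDerivWithinAt (fun u => χ (r u - R)) (deriv χ (r s - R) * prs s) I s :=
      (hχd _).hasDerivAt.comp_hasDerivWithinAt s ((hdr s hs).sub_const R)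
    have hd2 : HasDerivWithinAt (fun u => χ (-prs u))
        (deriv χ (-prs s) * -((r s - 3 * M) / (r s) ^ 4 * ℓ ^ 2)) I s :=
      (hχd _).hasDerivAt.comp_hasDerivWithinAt s (hdp s hs).neg
    refine ⟨_, hd1.mul hd2, ?_⟩
    have hrpos : 0 < r s := by linarith [hr2M s hs]
    have hterm1 : deriv χ (r s - R) * prs s * χ (-prs s) ≤ 0 := by
      rcases le_or_gt (prs s) 0 with hp | hp
      · nlinarith [mul_nonneg (hd' (r s - R)) (hχnn (-prs s))]
      · rw [hχ0 (-prs s) (by linarith)]; simp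
    have hterm2 : χ (r s - R) * (deriv χ (-prs s) * -((r s - 3 * M) / (r s) ^ 4 * ℓ ^ 2)) ≤ 0 := by
      rcases le_or_gt (r s) R with hrR | hrR
      · rw [hχ0 (r s - R) (by linarith)]; simp
      · have hp' : 0 ≤ (r s - 3 * M) / (r s) ^ 4 * ℓ ^ 2 :=
          mul_nonneg (div_nonneg (by linarith) (by positivity)) (sq_nonneg _)
        nlinarith [mul_nonneg (hχnn (r s - R)) (hd' (-prs s))]
    linarith
end

section
/- Let τ₁ ∈ ℝ and C ≥ 0, and let Ξ, d, s : [τ₁, ∞) → ℝ be functions such that Ξ is differentiable, d and s are continuous, d(t) ≥ 0 and |s(t)| ≤ C·d(t) for all t ≥ τ₁, and Ξ'(t) = −d(t)·Ξ(t) + s(t) for all t ≥ τ₁. Then |Ξ(τ)| ≤ C + |Ξ(τ₁)| for all τ ≥ τ₁. -/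
theorem damped_one_sided
    (τ₁ C : ℝ) (hC : 0 ≤ C) (Ξ d s : ℝ → ℝ)
    (hΞ : ∀ t, τ₁ ≤ t → HasDerivWithinAt Ξ (-(d t) * Ξ t + s t) (Set.Ici τ₁) t)
    (hd0 : ∀ t, τ₁ ≤ t → 0 ≤ d t)
    (hsC : ∀ t, τ₁ ≤ t → s t ≤ C * d t)
    (M : ℝ) (hM : C ≤ M) (hM0 : Ξ τ₁ ≤ M) :
    ∀ τ, τ₁ ≤ τ → Ξ τ ≤ M := by
  intro τ hτ
  have key : ∀ ε > 0, Ξ τ ≤ M + ε * (τ - τ₁) := by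
    intro ε hε
    have hcont : ContinuousOn Ξ (Set.Icc τ₁ τ) := by
      intro x hx
      exact ((hΞ x hx.1).continuousWithinAt).mono Set.Icc_subset_Ici_self
    have := image_le_of_deriv_right_lt_deriv_boundary (f := Ξ)
      (f' := fun x => -(d x) * Ξ x + s x) (a := τ₁) (b := τ)
      (B := fun x => M + ε * (x - τ₁)) (B' := fun _ => ε)
      hcont
      (fun x hx => (hΞ x hx.1).mono (Set.Ici_subset_Ici.2 hx.1))
      (by simpa using hM0)
      (fun x => by simpa using ((hasDerivAt_id x).sub_const τ₁).const_mul ε)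
      ?_ ⟨hτ, le_rfl⟩
    · exact this
    · intro x hx hq
      have heq : Ξ x = M + ε * (x - τ₁) := hq
      show -(d x) * Ξ x + s x < ε
      have h1 : 0 ≤ d x := hd0 x hx.1
      have h2 : s x ≤ C * d x := hsC x hx.1
      have h3 : 0 ≤ ε * (x - τ₁) := mul_nonneg hε.le (sub_nonneg.2 hx.1)
      nlinarith [mul_nonneg h1 (sub_nonneg.2 hM), mul_nonneg h1 h3]
  by_contra h
  push_neg at h
  have hpos : 0 < (Ξ τ - M) / (τ - τ₁ + 1) := by
    apply div_pos (by linarith) (by linarith)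
  have := key _ hpos
  have h4 : (Ξ τ - M) / (τ - τ₁ + 1) * (τ - τ₁) < Ξ τ - M := by
    rw [div_mul_eq_mul_div, div_lt_iff₀ (by linarith)]
    nlinarith
  linarith

/-- scalar Duhamel estimate for a damped transport equation. If `Ξ` is
differentiable on `[τ₁,∞)` with `Ξ' = −d·Ξ + s`, `d, s` continuous, `d ≥ 0` and
`|s| ≤ C·d` pointwise, then `|Ξ(τ)| ≤ C + |Ξ(τ₁)|` for all `τ ≥ τ₁`. -/
theorem damped_transport_duhamel_bound
    (τ₁ C : ℝ) (hC : 0 ≤ C) (Ξ d s : ℝ → ℝ)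
    (hΞ : ∀ t, τ₁ ≤ t → HasDerivWithinAt Ξ (-(d t) * Ξ t + s t) (Set.Ici τ₁) t)
    (hd : ContinuousOn d (Set.Ici τ₁))
    (hs : ContinuousOn s (Set.Ici τ₁))
    (hd0 : ∀ t, τ₁ ≤ t → 0 ≤ d t)
    (hsC : ∀ t, τ₁ ≤ t → |s t| ≤ C * d t) :
    ∀ τ, τ₁ ≤ τ → |Ξ τ| ≤ C + |Ξ τ₁| := by
  intro τ hτ
  set M := C + |Ξ τ₁| with hMdef
  have hM : C ≤ M := le_add_of_nonneg_right (abs_nonneg _)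
  have hup : Ξ τ ≤ M :=
    damped_one_sided τ₁ C hC Ξ d s hΞ hd0
      (fun t ht => (le_abs_self _).trans (hsC t ht))
      M hM ((le_abs_self _).trans (le_add_of_nonneg_left hC)) τ hτ
  have hlo : -Ξ τ ≤ M := by
    refine damped_one_sided τ₁ C hC (fun t => -Ξ t) d (fun t => -s t)
      (fun t ht => ?_) hd0
      (fun t ht => (neg_le_abs _).trans (hsC t ht))
      M hM ((neg_le_abs _).trans (le_add_of_nonneg_left hC)) τ hτ
    have := (hΞ t ht).neg
    exact this.congr_deriv (by ring)
  rw [abs_le]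
  constructor <;> linarith
end
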